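/- arXiv:0804.2956 — 4 statements merged into one kernel-verified Lean document; each statement's English description precedes it below -/
import Mathlib

section
/- If the automorphism group of the simple graph G acts transitively on the edge set of G (i.e., for any two edges e, f of G there exists a graph automorphism φ of G with φ(e) = f), then all projected edge vectors have the same norm: ‖P χ_(a,b)‖ = ‖P χ_(c,d)‖ for every two pairs (a,b) and (c,d) of adjacent vertices of G. -/
open scoped BigOperators RealInnerProductSpace

noncomputable section

variable {V : Type*} [Fintype V] [DecidableEq V]

/-- The indicator chain `χ_(a,b)`: 1 at `(a,b)`, −1 at `(b,a)`, 0 elsewhere. -/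
def edgeChi (a b : V) : EuclideanSpace ℝ (V × V) :=
  WithLp.toLp 2 fun p => if p = (a, b) then 1 else if p = (b, a) then -1 else 0

/-- The cycle space `H` of a simple graph `G`: the kernel of the boundary map
restricted to the edge space `C₁`. -/
def cycleSpace (G : SimpleGraph V) : Submodule ℝ (EuclideanSpace ℝ (V × V)) where
  carrier := { f | (∀ u v : V, f (u, v) = - f (v, u)) ∧
               (∀ u v : V, ¬ G.Adj u v → f (u, v) = 0) ∧
               (∀ v : V, ∑ u : V, f (u, v) = 0) }
  add_mem' := by
    rintro f g ⟨hf1, hf2, hf3⟩ ⟨hg1, hg2, hg3⟩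
    refine ⟨fun u v => ?_, fun u v h => ?_, fun v => ?_⟩
    · show f (u, v) + g (u, v) = -(f (v, u) + g (v, u))
      rw [hf1 u v, hg1 u v]; ring
    · show f (u, v) + g (u, v) = 0
      rw [hf2 u v h, hg2 u v h]; ring
    · show ∑ u : V, (f (u, v) + g (u, v)) = 0
      rw [Finset.sum_add_distrib, hf3 v, hg3 v]; ring
  zero_mem' := by
    refine ⟨fun u v => ?_, fun u v h => ?_, fun v => ?_⟩ <;> simp
  smul_mem' := by
    rintro c f ⟨hf1, hf2, hf3⟩
    refine ⟨fun u v => ?_, fun u v h => ?_, fun v => ?_⟩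
    · show c * f (u, v) = -(c * f (v, u))
      rw [hf1 u v]; ring
    · show c * f (u, v) = 0
      rw [hf2 u v h]; ring
    · show ∑ u : V, c * f (u, v) = 0
      rw [← Finset.mul_sum, hf3 v]; ring

/-- The projected edge vector `P χ_(a,b)`, where `P` is the orthogonal projection
onto the cycle space of `G`. -/
def projEdge (G : SimpleGraph V) (a b : V) : EuclideanSpace ℝ (V × V) :=
  (Submodule.orthogonalProjection (cycleSpace G) (edgeChi a b) : EuclideanSpace ℝ (V × V))

/-- The isometry of the edge space induced by a permutation of vertices. -/
def permIso (φ : V ≃ V) : EuclideanSpace ℝ (V × V) ≃ₗᵢ[ℝ] EuclideanSpace ℝ (V × V) :=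
  LinearIsometryEquiv.piLpCongrLeft 2 ℝ ℝ (Equiv.prodCongr φ φ)

omit [DecidableEq V] in
lemma permIso_apply (φ : V ≃ V) (f : EuclideanSpace ℝ (V × V)) (p : V × V) :
    permIso φ f p = f (φ.symm p.1, φ.symm p.2) := rfl

lemma permIso_edgeChi (φ : V ≃ V) (a b : V) :
    permIso φ (edgeChi a b) = edgeChi (φ a) (φ b) := by
  ext p
  rw [permIso_apply]
  simp [edgeChi, Prod.ext_iff, Equiv.symm_apply_eq]

lemma permIso_mem (G : SimpleGraph V) (φ : G ≃g G) (f : EuclideanSpace ℝ (V × V))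
    (hf : f ∈ cycleSpace G) : permIso (φ : V ≃ V) f ∈ cycleSpace G := by
  obtain ⟨h1, h2, h3⟩ := hf
  refine ⟨fun u v => h1 _ _, fun u v h => h2 _ _ ?_, fun v => ?_⟩
  · intro hadj
    exact h (by simpa using φ.map_adj_iff.mpr hadj)
  · show ∑ u : V, f ((φ : V ≃ V).symm u, (φ : V ≃ V).symm v) = 0
    rw [Equiv.sum_comp ((φ : V ≃ V)).symm (fun u => f (u, (φ : V ≃ V).symm v))]
    exact h3 _

lemma norm_projEdge_map (G : SimpleGraph V) (φ : G ≃g G) (a b : V) :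
    ‖projEdge G (φ a) (φ b)‖ = ‖projEdge G a b‖ := by
  set ψ : V ≃ V := (φ : V ≃ V) with hψ
  have hcoe : ∀ x : V, φ x = ψ x := fun _ => rfl
  rw [hcoe a, hcoe b]
  have hmem : permIso ψ (projEdge G a b) ∈ cycleSpace G :=
    permIso_mem G φ _ (by unfold projEdge; exact SetLike.coe_mem _)
  have hw : edgeChi a b - projEdge G a b ∈ (cycleSpace G)ᗮ :=
    Submodule.sub_starProjection_mem_orthogonal _
  have horth : edgeChi (ψ a) (ψ b) - permIso ψ (projEdge G a b) ∈ (cycleSpace G)ᗮ := by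
    rw [← permIso_edgeChi, ← map_sub, Submodule.mem_orthogonal]
    intro k hk
    have hk' : permIso ψ.symm k ∈ cycleSpace G := permIso_mem G φ.symm k hk
    have e1 : permIso ψ (permIso ψ.symm k) = k := by
      ext p
      rw [permIso_apply, permIso_apply]
      have hp : (ψ.symm.symm ((ψ.symm p.1, ψ.symm p.2).1),
          ψ.symm.symm ((ψ.symm p.1, ψ.symm p.2).2)) = p := by
        simp only [Equiv.symm_symm]
        exact Prod.ext (ψ.apply_symm_apply p.1) (ψ.apply_symm_apply p.2)
      exact congrArg k hp
    rw [← e1, LinearIsometryEquiv.inner_map_map]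
    exact hw _ hk'
  have key : projEdge G (ψ a) (ψ b) = permIso ψ (projEdge G a b) :=
    Submodule.eq_starProjection_of_mem_orthogonal hmem horth
  rw [key]
  exact (permIso ψ).norm_map _

lemma edgeChi_swap (a b : V) (hab : a ≠ b) : edgeChi b a = - edgeChi a b := by
  ext q
  simp only [edgeChi, PiLp.neg_apply, PiLp.toLp_apply]
  split_ifs <;> simp_all [Prod.ext_iff]

lemma norm_projEdge_swap (G : SimpleGraph V) (a b : V) (hab : a ≠ b) :
    ‖projEdge G b a‖ = ‖projEdge G a b‖ := by
  unfold projEdge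
  rw [edgeChi_swap a b hab, map_neg]
  simp

/-- **Theorem 1.3 (Kurihara).** If the automorphism group of a simple graph `G` acts
transitively on the edge set of `G`, then all projected edge vectors `P χ_(a,b)`
have the same norm. -/
theorem edge_transitive_proj_norm_eq
    {V : Type*} [Fintype V] [DecidableEq V] (G : SimpleGraph V)
    (hET : ∀ e ∈ G.edgeSet, ∀ f ∈ G.edgeSet, ∃ φ : G ≃g G, Sym2.map (⇑φ) e = f) :
    ∀ a b c d : V, G.Adj a b → G.Adj c d →
      ‖projEdge G a b‖ = ‖projEdge G c d‖ := by
  intro a b c d hab hcd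
  obtain ⟨φ, hφ⟩ := hET s(a, b) hab s(c, d) hcd
  rw [Sym2.map_pair_eq, Sym2.eq_iff] at hφ
  rcases hφ with ⟨h1, h2⟩ | ⟨h1, h2⟩
  · rw [← h1, ← h2, norm_projEdge_map]
  · rw [← h1, ← h2, norm_projEdge_map G φ b a, norm_projEdge_swap G a b hab.ne]

end
end

section
/- Let G be a connected simple graph on a finite vertex set. If the automorphism group of G acts transitively on the edge set of G but does not act transitively on the vertex set of G, then G is bipartite (i.e., G admits a proper 2-coloring). -/
/-- **Proposition 1.5 (Dauber–Harary).** A connected simple graph on a finite vertex set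
whose automorphism group is edge-transitive but not vertex-transitive is bipartite,
i.e. admits a proper 2-coloring. -/
theorem edge_transitive_not_vertex_transitive_bipartite
    {V : Type*} [Fintype V] (G : SimpleGraph V) (hconn : G.Connected)
    (hET : ∀ e ∈ G.edgeSet, ∀ f ∈ G.edgeSet, ∃ φ : G ≃g G, Sym2.map (⇑φ) e = f)
    (hVT : ¬ ∀ u v : V, ∃ φ : G ≃g G, φ u = v) :
    G.Colorable 2 := by
  classical
  -- G has an edge, else every vertex equals every other and G is vertex-transitive.
  obtain ⟨a, b, hab⟩ : ∃ a b, G.Adj a b := by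
    by_contra h
    push_neg at h
    apply hVT
    intro u v
    refine ⟨RelIso.refl _, ?_⟩
    obtain ⟨p⟩ := hconn.preconnected u v
    cases p with
    | nil => rfl
    | cons h' _ => exact absurd h' (h _ _)
  -- every vertex lies in the orbit of a or of b
  have haAB : ∀ v : V, (∃ φ : G ≃g G, φ a = v) ∨ (∃ φ : G ≃g G, φ b = v) := by
    intro v
    -- v has a neighbor
    obtain ⟨w, hvw⟩ : ∃ w, G.Adj v w := by
      rcases eq_or_ne v a with rfl | hva
      · exact ⟨b, hab⟩
      · obtain ⟨p⟩ := hconn.preconnected v a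
        cases p with
        | nil => exact absurd rfl hva
        | cons h' _ => exact ⟨_, h'⟩
    obtain ⟨φ, hφ⟩ := hET s(v, w) (G.mem_edgeSet.mpr hvw) s(a, b) (G.mem_edgeSet.mpr hab)
    rw [Sym2.map_pair_eq, Sym2.eq_iff] at hφ
    rcases hφ with ⟨h1, _⟩ | ⟨h2, _⟩
    · left; exact ⟨φ.symm, by rw [← h1]; exact φ.symm_apply_apply v⟩
    · right; exact ⟨φ.symm, by rw [← h2]; exact φ.symm_apply_apply v⟩
  -- b is not in the orbit of a
  have hnab : ¬ ∃ χ : G ≃g G, χ a = b := by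
    rintro ⟨χ, hχ⟩
    apply hVT
    have horb : ∀ v : V, ∃ φ : G ≃g G, φ a = v := by
      intro v
      rcases haAB v with h | ⟨φ, hφ⟩
      · exact h
      · exact ⟨χ.trans φ, by simp [RelIso.trans_apply, hχ, hφ]⟩
    intro u v
    obtain ⟨φ, hφ⟩ := horb u
    obtain ⟨ψ, hψ⟩ := horb v
    refine ⟨φ.symm.trans ψ, ?_⟩
    simp [RelIso.trans_apply, ← hφ, hψ]
  -- the 2-coloring
  refine ⟨SimpleGraph.Coloring.mk
    (fun v => if ∃ φ : G ≃g G, φ a = v then (0 : Fin 2) else 1) ?_⟩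
  intro u v huv
  obtain ⟨φ, hφ⟩ := hET s(u, v) (G.mem_edgeSet.mpr huv) s(a, b) (G.mem_edgeSet.mpr hab)
  rw [Sym2.map_pair_eq, Sym2.eq_iff] at hφ
  have key : ∀ x y : V, φ x = a → φ y = b →
      (if ∃ ψ : G ≃g G, ψ a = x then (0 : Fin 2) else 1) ≠
      (if ∃ ψ : G ≃g G, ψ a = y then (0 : Fin 2) else 1) := by
    intro x y hx hy
    have hxA : ∃ ψ : G ≃g G, ψ a = x := ⟨φ.symm, by rw [← hx]; exact φ.symm_apply_apply x⟩
    have hyA : ¬ ∃ ψ : G ≃g G, ψ a = y := by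
      rintro ⟨ψ, hψ⟩
      exact hnab ⟨ψ.trans φ, by simp [RelIso.trans_apply, hψ, hy]⟩
    rw [if_pos hxA, if_neg hyA]
    decide
  rcases hφ with ⟨h1, h2⟩ | ⟨h1, h2⟩
  · exact key u v h1 h2
  · exact (key v u h2 h1).symm
end

section
/- Let a group Γ act transitively on a finite set X, and consider the diagonal action of Γ on X × X. Let s and t be orbits of Γ on X × X. If the pairs (x, y) and (x', y') lie in the same Γ-orbit of X × X, then the cardinalities |{ z ∈ X : (x, z) ∈ s and (z, y) ∈ t }| and |{ z ∈ X : (x', z) ∈ s and (z, y') ∈ t }| are equal. -/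
/-- **Intersection numbers of Schurian schemes.** Let a group `Γ` act transitively on a
finite set `X`, and let `s`, `t` be orbits of the diagonal action of `Γ` on `X × X`.
If `(x, y)` and `(x', y')` lie in the same `Γ`-orbit of `X × X`, then the numbers of
`z ∈ X` with `(x, z) ∈ s` and `(z, y) ∈ t`, resp. `(x', z) ∈ s` and `(z, y') ∈ t`,
coincide. -/
theorem schurian_intersection_number_constant
    {Γ X : Type*} [Group Γ] [MulAction Γ X] [Fintype X]
    [MulAction.IsPretransitive Γ X]
    (s t : Set (X × X))
    (hs : ∃ p : X × X, s = MulAction.orbit Γ p)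
    (ht : ∃ p : X × X, t = MulAction.orbit Γ p)
    (x y x' y' : X) (horb : (x', y') ∈ MulAction.orbit Γ (x, y)) :
    {z : X | (x, z) ∈ s ∧ (z, y) ∈ t}.ncard = {z : X | (x', z) ∈ s ∧ (z, y') ∈ t}.ncard := by
  obtain ⟨g, hg⟩ := horb
  obtain ⟨hx, hy⟩ : g • x = x' ∧ g • y = y' := by
    have h2 : g • (x, y) = (x', y') := hg
    rw [Prod.smul_mk, Prod.ext_iff] at h2; exact h2
  have key : ∀ (u : Set (X × X)), (∃ p, u = MulAction.orbit Γ p) →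
      ∀ a b : X, (a, b) ∈ u ↔ (g • a, g • b) ∈ u := by
    rintro u ⟨p, rfl⟩ a b
    constructor
    · rintro ⟨h, hh⟩
      have hh' : h • p = (a, b) := hh
      refine ⟨g * h, ?_⟩
      show (g * h) • p = (g • a, g • b)
      rw [mul_smul, hh', Prod.smul_mk]
    · rintro ⟨h, hh⟩
      have hh' : h • p = (g • a, g • b) := hh
      refine ⟨g⁻¹ * h, ?_⟩
      show (g⁻¹ * h) • p = (a, b)
      rw [mul_smul, hh', Prod.smul_mk]; simp
  have himg : {z : X | (x', z) ∈ s ∧ (z, y') ∈ t}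
      = (g • ·) '' {z : X | (x, z) ∈ s ∧ (z, y) ∈ t} := by
    ext w
    simp only [Set.mem_image, Set.mem_setOf_eq]
    constructor
    · rintro ⟨h1, h2⟩
      refine ⟨g⁻¹ • w, ⟨?_, ?_⟩, by simp⟩
      · rw [key s hs]; simpa [hx] using h1
      · rw [key t ht]; simpa [hy] using h2
    · rintro ⟨w0, ⟨h1, h2⟩, rfl⟩
      exact ⟨by rw [← hx]; exact (key s hs _ _).1 h1,
             by rw [← hy]; exact (key t ht _ _).1 h2⟩
  rw [himg, Set.ncard_image_of_injective _ (MulAction.injective g)]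
end

section
/- Let d ≥ 2 be an integer. In EuclideanSpace ℝ (Fin (d+1)), let v_k = e_k − (1/(d+1)) ∑_i e_i, let u_k = v_k/‖v_k‖, and let H = { x : ∑_i x_i = 0 }. Then the antipodal 2(d+1)-point set X = {u_k} ∪ {−u_k} on the unit sphere of H satisfies the moment conditions of a spherical 3-design in the d-dimensional space H: ∑_{x ∈ X} x = 0; for every w ∈ H, ∑_{x ∈ X} ⟨x, w⟩² = (2(d+1)/d)‖w‖²; and for all w₁, w₂, w₃ ∈ H, ∑_{x ∈ X} ⟨x, w₁⟩⟨x, w₂⟩⟨x, w₃⟩ = 0. -/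
open scoped BigOperators RealInnerProductSpace

noncomputable section

lemma aux_split {E M : Type*} [AddCommMonoid M] {n : ℕ} {a b : Fin n → E}
    (ha : Function.Injective a) (hb : Function.Injective b)
    (hdisj : Disjoint (Set.range a) (Set.range b)) (f : E → M) :
    ∑ᶠ x ∈ (Set.range a ∪ Set.range b), f x = ∑ k, f (a k) + ∑ k, f (b k) := by
  rw [finsum_mem_union hdisj (Set.finite_range a) (Set.finite_range b),
    finsum_mem_range ha, finsum_mem_range hb, finsum_eq_sum_of_fintype,
    finsum_eq_sum_of_fintype]

/-- **Section 5.2: the diamond lattice is a spherical 3-design.** The antipodal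
`2(d+1)`-point set `X = {±u_k}` on the unit sphere of the hyperplane
`H = {x : ∑ i, x i = 0}` satisfies the first-, second- and third-moment conditions of a
spherical 3-design in the `d`-dimensional space `H`. -/
theorem diamond_lattice_design_moments
    (d : ℕ) (hd : 2 ≤ d)
    (v : Fin (d + 1) → EuclideanSpace ℝ (Fin (d + 1)))
    (hv : ∀ k, v k = EuclideanSpace.single k 1 -
      ((d + 1 : ℝ))⁻¹ • ∑ i : Fin (d + 1), EuclideanSpace.single i (1 : ℝ))
    (u : Fin (d + 1) → EuclideanSpace ℝ (Fin (d + 1)))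
    (hu : ∀ k, u k = ‖v k‖⁻¹ • v k)
    (X : Set (EuclideanSpace ℝ (Fin (d + 1))))
    (hX : X = Set.range u ∪ Set.range (fun k => -u k)) :
    (∑ᶠ x ∈ X, x = 0) ∧
    (∀ w : EuclideanSpace ℝ (Fin (d + 1)), ∑ i, w i = 0 →
      ∑ᶠ x ∈ X, ⟪x, w⟫ ^ 2 = (2 * (d + 1) / d : ℝ) * ‖w‖ ^ 2) ∧
    (∀ w₁ w₂ w₃ : EuclideanSpace ℝ (Fin (d + 1)),
      (∑ i, w₁ i = 0) → (∑ i, w₂ i = 0) → (∑ i, w₃ i = 0) →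
      ∑ᶠ x ∈ X, ⟪x, w₁⟫ * ⟪x, w₂⟫ * ⟪x, w₃⟫ = 0) := by
  have hd2 : (2:ℝ) ≤ (d:ℝ) := by exact_mod_cast hd
  have hd0 : (0:ℝ) < (d:ℝ) := by linarith
  have hd1 : (0:ℝ) < (d:ℝ) + 1 := by linarith
  -- coordinates of v
  have hvc : ∀ k i, (v k) i = (if i = k then 1 else 0) - ((d:ℝ)+1)⁻¹ := by
    intro k i
    have hs : (∑ j : Fin (d+1), EuclideanSpace.single j (1:ℝ)) i = 1 := by
      rw [show (∑ j : Fin (d+1), EuclideanSpace.single j (1:ℝ)) i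
          = ∑ j : Fin (d+1), (EuclideanSpace.single j (1:ℝ)) i from by rw [WithLp.ofLp_sum]; exact Finset.sum_apply i _ _]
      simp [EuclideanSpace.single_apply]
    rw [hv]
    simp [EuclideanSpace.single_apply, PiLp.sub_apply, PiLp.smul_apply, hs]
  -- sum of coordinates of v k vanishes
  have hvsum : ∀ k, ∑ i, (v k) i = 0 := by
    intro k
    simp only [hvc]
    rw [Finset.sum_sub_distrib]
    simp [Finset.sum_ite_eq, mul_comm]
    field_simp
    ring
  -- inner product with zero-sum vectors
  have hvw : ∀ k (w : EuclideanSpace ℝ (Fin (d+1))), (∑ i, w i = 0) → ⟪v k, w⟫ = w k := by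
    intro k w hw
    rw [PiLp.inner_apply]
    simp only [RCLike.inner_apply, conj_trivial, hvc, sub_mul, ite_mul, one_mul, zero_mul, mul_sub, mul_ite, mul_one, mul_zero]
    rw [Finset.sum_sub_distrib]
    simp [Finset.sum_ite_eq', ← Finset.mul_sum, ← Finset.sum_mul, hw]
  -- norm of v k
  have hn2 : ∀ k, ‖v k‖ ^ 2 = (d:ℝ) / ((d:ℝ)+1) := by
    intro k
    have h1 := hvw k (v k) (hvsum k)
    rw [real_inner_self_eq_norm_sq] at h1
    rw [h1, hvc]
    simp
    field_simp
    ring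
  have hnpos : ∀ k, 0 < ‖v k‖ := by
    intro k
    have h2 := hn2 k
    by_contra h
    push_neg at h
    have h0 : ‖v k‖ = 0 := le_antisymm h (norm_nonneg _)
    rw [h0] at h2
    have hdd : (0:ℝ) < (d:ℝ) / ((d:ℝ)+1) := by positivity
    rw [← h2] at hdd
    norm_num at hdd
  have hnorm : ∀ k, ‖v k‖ = Real.sqrt ((d:ℝ) / ((d:ℝ)+1)) := by
    intro k
    rw [← hn2 k, Real.sqrt_sq (norm_nonneg _)]
  have hninv2 : ∀ k, (‖v k‖⁻¹) ^ 2 = ((d:ℝ)+1) / d := by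
    intro k
    rw [inv_pow, hn2, inv_div]
  -- inner of u with zero-sum vectors
  have huw : ∀ k (w : EuclideanSpace ℝ (Fin (d+1))), (∑ i, w i = 0) → ⟪u k, w⟫ = ‖v k‖⁻¹ * w k := by
    intro k w hw
    rw [hu, real_inner_smul_left, hvw k w hw]
  -- u has zero coordinate sum
  have husum : ∀ k, ∑ i, (u k) i = 0 := by
    intro k
    rw [hu]
    simp only [PiLp.smul_apply, smul_eq_mul, ← Finset.mul_sum, hvsum, mul_zero]
  -- inner products among the u's
  have huu : ∀ k j, ⟪u k, u j⟫ = if k = j then 1 else -1/(d:ℝ) := by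
    intro k j
    rw [huw k (u j) (husum j), hu j, PiLp.smul_apply, smul_eq_mul, hvc j k,
      hnorm j, ← hnorm k, ← mul_assoc, ← sq, hninv2]
    by_cases h : k = j
    · rw [if_pos h, if_pos h]
      field_simp
      ring
    · rw [if_neg h, if_neg h]
      field_simp
      ring
  -- injectivity and disjointness
  have hukuk : ∀ k, ⟪u k, u k⟫ = 1 := by
    intro k; rw [huu, if_pos rfl]
  have ha : Function.Injective u := by
    intro k j h
    by_contra hne
    have h1 := huu k j
    rw [← h, hukuk, if_neg hne] at h1
    have : (-1:ℝ)/d < 1 := by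
      rw [div_lt_iff₀ hd0]; linarith
    rw [← h1] at this
    norm_num at this
  have hne : ∀ k j, u k ≠ -u j := by
    intro k j h
    have h1 := huu k j
    rw [h, inner_neg_left, hukuk] at h1
    by_cases hkj : k = j
    · rw [if_pos hkj] at h1
      norm_num at h1
    · rw [if_neg hkj] at h1
      have hne1 : (-1:ℝ) ≠ -1/(d:ℝ) := by
        intro hc
        have : (d:ℝ) = 1 := by field_simp at hc; linarith
        linarith
      exact hne1 h1
  have hb : Function.Injective (fun k => -u k) := by
    intro k j h
    exact ha (neg_injective h)
  have hdisj : Disjoint (Set.range u) (Set.range (fun k => -u k)) := by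
    rw [Set.disjoint_left]
    rintro x ⟨k, rfl⟩ ⟨j, hj⟩
    exact hne k j hj.symm
  have key : ∀ {M : Type} [AddCommMonoid M] (f : EuclideanSpace ℝ (Fin (d+1)) → M),
      ∑ᶠ x ∈ X, f x = ∑ k, f (u k) + ∑ k, f (-u k) := by
    intro M _ f
    rw [hX]
    exact aux_split ha hb hdisj f
  refine ⟨?_, ?_, ?_⟩
  · rw [key (fun x => x)]
    simp
  · intro w hw
    rw [key (fun x => ⟪x, w⟫ ^ 2)]
    have h1 : ∀ k, ⟪-u k, w⟫ ^ 2 = ⟪u k, w⟫ ^ 2 := by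
      intro k; rw [inner_neg_left]; ring
    have hw2 : ‖w‖ ^ 2 = ∑ i, w i ^ 2 := by
      rw [← real_inner_self_eq_norm_sq, PiLp.inner_apply]
      simp [RCLike.inner_apply, conj_trivial, sq]
    simp only [h1, huw _ w hw, mul_pow, hninv2]
    rw [hw2, Finset.mul_sum, ← Finset.sum_add_distrib]
    exact Finset.sum_congr rfl fun i _ => by ring
  · intro w₁ w₂ w₃ h1 h2 h3
    rw [key (fun x => ⟪x, w₁⟫ * ⟪x, w₂⟫ * ⟪x, w₃⟫)]
    simp only [inner_neg_left]
    rw [← Finset.sum_add_distrib]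
    simp only [show ∀ a b c : ℝ, a*b*c + -a * -b * -c = 0 from fun a b c => by ring]
    simp
end
end
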